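/- Let n ≥ k, let B, B* ∈ ℝ^{k×d} have orthonormal rows with ‖B − B*‖₂ ≤ ε, let v* ∈ ℝ^k, and let X ∈ ℝ^{n×d}. Suppose the k×k matrix B Xᵀ X Bᵀ is invertible, and define the linear-probing solution v_lp = (B Xᵀ X Bᵀ)⁻¹ B Xᵀ X B*ᵀ v*. Let s_max = ‖X‖₂ and s_min = inf{‖X Bᵀ u‖₂ : u ∈ ℝ^k, ‖u‖₂ = 1} (so s_min > 0). Then ‖B*ᵀ v* − Bᵀ v_lp‖₂ ≤ ε ‖v*‖₂ + (s_max² / s_min²) · ε · ‖v*‖₂. -/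

import Mathlib

open Matrix

noncomputable section

/-- View a plain vector as an element of Euclidean space. -/
def toE {n : ℕ} (x : Fin n → ℝ) : EuclideanSpace ℝ (Fin n) := WithLp.toLp 2 x

/-- Euclidean (ℓ2) norm of a vector. -/
def enorm2 {n : ℕ} (x : Fin n → ℝ) : ℝ := ‖toE x‖

/-- Spectral (ℓ2 operator) norm of a matrix. -/
def specNorm {m n : ℕ} (M : Matrix (Fin m) (Fin n) ℝ) : ℝ :=
  sSup {c | ∃ x : Fin n → ℝ, enorm2 x = 1 ∧ c = enorm2 (M.mulVec x)}

lemma enorm2_nonneg {m : ℕ} (x : Fin m → ℝ) : 0 ≤ enorm2 x := norm_nonneg _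

lemma inner_toE {m : ℕ} (x y : Fin m → ℝ) : inner ℝ (toE x) (toE y) = x ⬝ᵥ y := by
  simp [toE, PiLp.inner_apply, dotProduct, mul_comm]

lemma enorm2_sq {m : ℕ} (x : Fin m → ℝ) : enorm2 x ^ 2 = x ⬝ᵥ x := by
  rw [← inner_toE, real_inner_self_eq_norm_sq]; rfl

lemma dot_le {m : ℕ} (x y : Fin m → ℝ) : x ⬝ᵥ y ≤ enorm2 x * enorm2 y := by
  rw [← inner_toE]; exact real_inner_le_norm _ _

/-- matrix as CLM on Euclidean spaces -/
def mvCLM {m p : ℕ} (M : Matrix (Fin m) (Fin p) ℝ) :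
    EuclideanSpace ℝ (Fin p) →L[ℝ] EuclideanSpace ℝ (Fin m) :=
  LinearMap.toContinuousLinearMap
    { toFun := fun x => toE (M.mulVec x)
      map_add' := fun x y => by simp [toE, Matrix.mulVec_add]
      map_smul' := fun c x => by simp [toE, Matrix.mulVec_smul] }

lemma mvCLM_apply {m p : ℕ} (M : Matrix (Fin m) (Fin p) ℝ) (x : Fin p → ℝ) :
    mvCLM M (toE x) = toE (M.mulVec x) := rfl

lemma specNorm_bddAbove {m p : ℕ} (M : Matrix (Fin m) (Fin p) ℝ) :
    BddAbove {c | ∃ x : Fin p → ℝ, enorm2 x = 1 ∧ c = enorm2 (M.mulVec x)} := by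
  refine ⟨‖mvCLM M‖, fun c hc => ?_⟩
  obtain ⟨x, hx, rfl⟩ := hc
  have := (mvCLM M).le_opNorm (toE x)
  rw [mvCLM_apply] at this
  simpa [enorm2, hx] using (by simpa [enorm2] using this.trans_eq (by rw [show ‖toE x‖ = 1 from hx, mul_one]))


lemma toE_smul {m : ℕ} (c : ℝ) (x : Fin m → ℝ) : toE (c • x) = c • toE x := by simp [toE]

lemma enorm2_smul {m : ℕ} (c : ℝ) (x : Fin m → ℝ) : enorm2 (c • x) = |c| * enorm2 x := by
  rw [enorm2, toE_smul, norm_smul]; rfl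

lemma enorm2_eq_zero {m : ℕ} {x : Fin m → ℝ} (h : enorm2 x = 0) : x = 0 := by
  have := norm_eq_zero.mp h
  simpa [toE] using this

lemma specNorm_nonneg {m p : ℕ} (M : Matrix (Fin m) (Fin p) ℝ) : 0 ≤ specNorm M := by
  rcases Nat.eq_zero_or_pos p with hp | hp
  · subst hp
    have hempty : {c | ∃ x : Fin 0 → ℝ, enorm2 x = 1 ∧ c = enorm2 (M.mulVec x)} = ∅ := by
      ext c
      simp only [Set.mem_setOf_eq, Set.mem_empty_iff_false, iff_false]
      rintro ⟨x, hx, -⟩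
      have h0 : toE x = 0 := by ext i; exact i.elim0
      rw [enorm2, h0, norm_zero] at hx
      exact one_ne_zero hx.symm
    rw [specNorm, hempty, Real.sSup_empty]
  · set x : Fin p → ℝ := Pi.single ⟨0, hp⟩ 1 with hx
    have hx1 : enorm2 x = 1 := by
      have h2 : enorm2 x ^ 2 = 1 := by
        rw [enorm2_sq]
        simp [hx, dotProduct, Pi.single_apply]
      have := Real.sqrt_sq (enorm2_nonneg x)
      rw [h2] at this
      simpa using this.symm
    have hmem : enorm2 (M.mulVec x) ∈
        {c | ∃ x : Fin p → ℝ, enorm2 x = 1 ∧ c = enorm2 (M.mulVec x)} := ⟨x, hx1, rfl⟩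
    exact (enorm2_nonneg _).trans (le_csSup (specNorm_bddAbove M) hmem)

/-- Lemma A: the fundamental operator-norm bound. -/
lemma enorm2_mulVec_le {m p : ℕ} (M : Matrix (Fin m) (Fin p) ℝ) (x : Fin p → ℝ) :
    enorm2 (M.mulVec x) ≤ specNorm M * enorm2 x := by
  rcases eq_or_ne (enorm2 x) 0 with h | h
  · have hx := enorm2_eq_zero h
    subst hx
    simp only [Matrix.mulVec_zero]
    have h1 : enorm2 (0 : Fin m → ℝ) = 0 := by simp [enorm2, toE]
    have h2 : enorm2 (0 : Fin p → ℝ) = 0 := by simp [enorm2, toE]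
    rw [h1, h2, mul_zero]
  · have hpos : 0 < enorm2 x := lt_of_le_of_ne (enorm2_nonneg x) (Ne.symm h)
    set c := enorm2 x with hc
    have hu : enorm2 (c⁻¹ • x) = 1 := by
      rw [enorm2_smul, abs_of_pos (inv_pos.mpr hpos), inv_mul_cancel₀ h]
    have hmem : enorm2 (M.mulVec (c⁻¹ • x)) ∈
        {c | ∃ x : Fin p → ℝ, enorm2 x = 1 ∧ c = enorm2 (M.mulVec x)} :=
      ⟨c⁻¹ • x, hu, rfl⟩
    have hle := le_csSup (specNorm_bddAbove M) hmem
    rw [Matrix.mulVec_smul, enorm2_smul, abs_of_pos (inv_pos.mpr hpos)] at hle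
    calc enorm2 (M.mulVec x) = c * (c⁻¹ * enorm2 (M.mulVec x)) := by
          field_simp
      _ ≤ c * specNorm M := by
          exact mul_le_mul_of_nonneg_left hle (le_of_lt hpos)
      _ = specNorm M * c := mul_comm _ _

/-- Lemma B: the transposed bound. -/
lemma enorm2_transpose_mulVec_le {m p : ℕ} (M : Matrix (Fin m) (Fin p) ℝ) (y : Fin m → ℝ) :
    enorm2 (Mᵀ.mulVec y) ≤ specNorm M * enorm2 y := by
  set t := enorm2 (Mᵀ.mulVec y) with ht
  have htn : 0 ≤ t := enorm2_nonneg _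
  have hsq : t ^ 2 = y ⬝ᵥ M.mulVec (Mᵀ.mulVec y) := by
    rw [enorm2_sq, Matrix.dotProduct_mulVec y M, ← Matrix.mulVec_transpose]
  have h1 : y ⬝ᵥ M.mulVec (Mᵀ.mulVec y) ≤ enorm2 y * (specNorm M * t) :=
    (dot_le _ _).trans (mul_le_mul_of_nonneg_left (enorm2_mulVec_le M _) (enorm2_nonneg y))
  rcases eq_or_lt_of_le htn with h0 | h0
  · rw [← h0]; exact mul_nonneg (specNorm_nonneg M) (enorm2_nonneg y)
  · nlinarith [hsq, h1]

/-- orthonormal rows: Bᵀ is an isometry. -/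
lemma enorm2_orth {k d : ℕ} {B : Matrix (Fin k) (Fin d) ℝ} (hB : B * Bᵀ = 1)
    (u : Fin k → ℝ) : enorm2 (Bᵀ.mulVec u) = enorm2 u := by
  have hsq : enorm2 (Bᵀ.mulVec u) ^ 2 = enorm2 u ^ 2 := by
    rw [enorm2_sq, enorm2_sq, Matrix.dotProduct_mulVec _ Bᵀ u, Matrix.vecMul_transpose,
      Matrix.mulVec_mulVec, hB, Matrix.one_mulVec]
  calc enorm2 (Bᵀ.mulVec u) = Real.sqrt (enorm2 (Bᵀ.mulVec u) ^ 2) :=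
        (Real.sqrt_sq (enorm2_nonneg _)).symm
    _ = Real.sqrt (enorm2 u ^ 2) := by rw [hsq]
    _ = enorm2 u := Real.sqrt_sq (enorm2_nonneg _)

/-- orthonormal rows: B is a contraction. -/
lemma enorm2_contract {k d : ℕ} {B : Matrix (Fin k) (Fin d) ℝ} (hB : B * Bᵀ = 1)
    (w : Fin d → ℝ) : enorm2 (B.mulVec w) ≤ enorm2 w := by
  set t := enorm2 (B.mulVec w) with htdef
  have htn : 0 ≤ t := enorm2_nonneg _
  have hsq : t ^ 2 = (Bᵀ.mulVec (B.mulVec w)) ⬝ᵥ w := by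
    rw [enorm2_sq, Matrix.dotProduct_mulVec _ B w, ← Matrix.mulVec_transpose]
  have h1 : (Bᵀ.mulVec (B.mulVec w)) ⬝ᵥ w ≤ t * enorm2 w := by
    have := dot_le (Bᵀ.mulVec (B.mulVec w)) w
    rwa [enorm2_orth hB] at this
  rcases eq_or_lt_of_le htn with h0 | h0
  · rw [← h0]; exact enorm2_nonneg w
  · nlinarith [hsq, h1]


lemma toE_add {m : ℕ} (x y : Fin m → ℝ) : toE (x + y) = toE x + toE y := by simp [toE]

lemma enorm2_add_le {m : ℕ} (x y : Fin m → ℝ) : enorm2 (x + y) ≤ enorm2 x + enorm2 y :=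
  by unfold enorm2; rw [toE_add]; exact norm_add_le (toE x) (toE y)

lemma enorm2_neg {m : ℕ} (x : Fin m → ℝ) : enorm2 (-x) = enorm2 x := by
  unfold enorm2; rw [show toE (-x) = -toE x by simp [toE]]; exact norm_neg (toE x)

lemma enorm2_unit_single {k : ℕ} (hk : 0 < k) : enorm2 (Pi.single (⟨0, hk⟩ : Fin k) (1:ℝ)) = 1 := by
  set x : Fin k → ℝ := Pi.single ⟨0, hk⟩ 1 with hx
  have h2 : enorm2 x ^ 2 = 1 := by
    rw [enorm2_sq]
    simp [hx, dotProduct, Pi.single_apply]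
  have := Real.sqrt_sq (enorm2_nonneg x)
  rw [h2] at this
  simpa using this.symm

/-- bound on the OOD-relevant error of the linear-probing solution
`v_lp = (B Xᵀ X Bᵀ)⁻¹ B Xᵀ X B*ᵀ v*`:
`‖B*ᵀ v* − Bᵀ v_lp‖₂ ≤ ε ‖v*‖₂ + (s_max²/s_min²) ε ‖v*‖₂`. -/
theorem stmt_13 {n d k : ℕ} (hnk : k ≤ n)
    (B Bstar : Matrix (Fin k) (Fin d) ℝ)
    (hB : B * Bᵀ = 1) (hBs : Bstar * Bstarᵀ = 1)
    (ε : ℝ) (hε : specNorm (B - Bstar) ≤ ε)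
    (vstar : Fin k → ℝ) (X : Matrix (Fin n) (Fin d) ℝ)
    (hinv : IsUnit (B * Xᵀ * X * Bᵀ)) :
    enorm2 (Bstarᵀ.mulVec vstar -
        Bᵀ.mulVec ((B * Xᵀ * X * Bᵀ)⁻¹.mulVec ((B * Xᵀ * X * Bstarᵀ).mulVec vstar))) ≤
      ε * enorm2 vstar +
        (specNorm X ^ 2 /
            sInf {c | ∃ u : Fin k → ℝ, enorm2 u = 1 ∧ c = enorm2 (X.mulVec (Bᵀ.mulVec u))} ^ 2) *
          ε * enorm2 vstar := by
  rcases Nat.eq_zero_or_pos k with hk | hk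
  · subst hk
    have hv : vstar = 0 := funext fun i => i.elim0
    subst hv
    have e0 : ∀ {m : ℕ}, enorm2 (0 : Fin m → ℝ) = 0 := fun {m} => by simp [enorm2, toE]
    simp only [Matrix.mulVec_zero, sub_zero, e0, mul_zero]
    norm_num
  -- main case
  set M : Matrix (Fin k) (Fin k) ℝ := B * Xᵀ * X * Bᵀ with hM
  set Nm : Matrix (Fin k) (Fin k) ℝ := B * Xᵀ * X * Bstarᵀ with hNm
  set S : Set ℝ := {c | ∃ u : Fin k → ℝ, enorm2 u = 1 ∧ c = enorm2 (X.mulVec (Bᵀ.mulVec u))}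
    with hS
  set sm : ℝ := sInf S with hsm
  have hdet : IsUnit M.det := (Matrix.isUnit_iff_isUnit_det M).mp hinv
  have hSbdd : BddBelow S := ⟨0, by rintro c ⟨u, -, rfl⟩; exact enorm2_nonneg _⟩
  -- a unit vector
  set u1 : Fin k → ℝ := Pi.single ⟨0, hk⟩ 1 with hu1def
  have hu1 : enorm2 u1 = 1 := enorm2_unit_single hk
  have hSne : S.Nonempty := ⟨enorm2 (X.mulVec (Bᵀ.mulVec u1)), u1, hu1, rfl⟩
  -- sInf is a lower bound on the Rayleigh-type quotient
  have hsmle : ∀ u : Fin k → ℝ, sm * enorm2 u ≤ enorm2 (X.mulVec (Bᵀ.mulVec u)) := by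
    intro u
    rcases eq_or_ne (enorm2 u) 0 with h | h
    · rw [h, mul_zero]; exact enorm2_nonneg _
    · have hpos : 0 < enorm2 u := lt_of_le_of_ne (enorm2_nonneg u) (Ne.symm h)
      set c := enorm2 u with hc
      have hu' : enorm2 (c⁻¹ • u) = 1 := by
        rw [enorm2_smul, abs_of_pos (inv_pos.mpr hpos), inv_mul_cancel₀ h]
      have hmem : enorm2 (X.mulVec (Bᵀ.mulVec (c⁻¹ • u))) ∈ S := ⟨c⁻¹ • u, hu', rfl⟩
      have hle := csInf_le hSbdd hmem
      rw [Matrix.mulVec_smul, Matrix.mulVec_smul, enorm2_smul,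
        abs_of_pos (inv_pos.mpr hpos)] at hle
      calc sm * c ≤ c⁻¹ * enorm2 (X.mulVec (Bᵀ.mulVec u)) * c :=
            mul_le_mul_of_nonneg_right hle (le_of_lt hpos)
        _ = enorm2 (X.mulVec (Bᵀ.mulVec u)) := by field_simp
  -- sInf is positive (compactness)
  have hsm_pos : 0 < sm := by
    set f : EuclideanSpace ℝ (Fin k) → ℝ := fun u => enorm2 ((X * Bᵀ).mulVec u) with hf
    have hfc : Continuous f := (mvCLM (X * Bᵀ)).continuous.norm
    have hx0 : (toE u1 : EuclideanSpace ℝ (Fin k)) ∈ Metric.sphere (0 : EuclideanSpace ℝ (Fin k)) 1 :=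
      mem_sphere_zero_iff_norm.mpr hu1
    obtain ⟨u0, hu0, hmin⟩ :=
      (isCompact_sphere (0 : EuclideanSpace ℝ (Fin k)) 1).exists_isMinOn ⟨toE u1, hx0⟩
        hfc.continuousOn
    have hu0n : enorm2 (u0 : Fin k → ℝ) = 1 := by simpa [enorm2, toE] using hu0
    have hf0 : 0 < f u0 := by
      rcases eq_or_lt_of_le (enorm2_nonneg ((X * Bᵀ).mulVec u0)) with h0 | h0
      · exfalso
        have hz : (X * Bᵀ).mulVec (u0 : Fin k → ℝ) = 0 := enorm2_eq_zero h0.symm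
        have hMz : M.mulVec (u0 : Fin k → ℝ) = 0 := by
          have hM' : M = (B * Xᵀ) * (X * Bᵀ) := by rw [hM, Matrix.mul_assoc]
          rw [hM', ← Matrix.mulVec_mulVec, hz, Matrix.mulVec_zero]
        have : (u0 : Fin k → ℝ) = 0 := by
          have h1 : M⁻¹.mulVec (M.mulVec (u0 : Fin k → ℝ)) = (u0 : Fin k → ℝ) := by
            rw [Matrix.mulVec_mulVec, Matrix.nonsing_inv_mul _ hdet, Matrix.one_mulVec]
          rw [hMz, Matrix.mulVec_zero] at h1
          exact h1.symm
        rw [this] at hu0n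
        have : enorm2 (0 : Fin k → ℝ) = 0 := by simp [enorm2, toE]
        rw [this] at hu0n
        exact one_ne_zero hu0n.symm
      · exact h0
    refine lt_of_lt_of_le hf0 (le_csInf hSne ?_)
    rintro c ⟨u, hu, rfl⟩
    have humem : (toE u : EuclideanSpace ℝ (Fin k)) ∈ Metric.sphere (0 : EuclideanSpace ℝ (Fin k)) 1 :=
      mem_sphere_zero_iff_norm.mpr hu
    have := isMinOn_iff.mp hmin (toE u) humem
    rw [hf] at this
    simpa [Matrix.mulVec_mulVec, toE] using this
  -- quadratic bound for M
  have hMv : ∀ v : Fin k → ℝ,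
      sm ^ 2 * enorm2 v ^ 2 ≤ enorm2 (M.mulVec v) * enorm2 v := by
    intro v
    have h1 : sm * enorm2 v ≤ enorm2 ((X * Bᵀ).mulVec v) := by
      rw [← Matrix.mulVec_mulVec]; exact hsmle v
    have h2 : ((X * Bᵀ).mulVec v) ⬝ᵥ ((X * Bᵀ).mulVec v) = (M.mulVec v) ⬝ᵥ v := by
      rw [Matrix.dotProduct_mulVec _ (X * Bᵀ) v, ← Matrix.mulVec_transpose,
        Matrix.transpose_mul, Matrix.transpose_transpose, Matrix.mulVec_mulVec,
        ← Matrix.mul_assoc, ← hM]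
    have h3 : (M.mulVec v) ⬝ᵥ v ≤ enorm2 (M.mulVec v) * enorm2 v := dot_le _ _
    have h4 : enorm2 ((X * Bᵀ).mulVec v) ^ 2 = ((X * Bᵀ).mulVec v) ⬝ᵥ ((X * Bᵀ).mulVec v) :=
      enorm2_sq _
    have h5 : 0 ≤ sm * enorm2 v := mul_nonneg (le_of_lt hsm_pos) (enorm2_nonneg v)
    nlinarith [h1, h2, h3, h4, h5, enorm2_nonneg ((X * Bᵀ).mulVec v)]
  -- inverse bound
  have hinvb : ∀ w : Fin k → ℝ, enorm2 (M⁻¹.mulVec w) ≤ enorm2 w / sm ^ 2 := by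
    intro w
    have hMw : M.mulVec (M⁻¹.mulVec w) = w := by
      rw [Matrix.mulVec_mulVec, Matrix.mul_nonsing_inv _ hdet, Matrix.one_mulVec]
    have hv := hMv (M⁻¹.mulVec w)
    rw [hMw] at hv
    rcases eq_or_lt_of_le (enorm2_nonneg (M⁻¹.mulVec w)) with h0 | h0
    · rw [← h0]
      exact div_nonneg (enorm2_nonneg w) (by positivity)
    · rw [le_div_iff₀ (by positivity : (0:ℝ) < sm ^ 2)]
      nlinarith [hv, h0]
  -- the error decomposition
  have hvstar_eq : M⁻¹.mulVec (M.mulVec vstar) = vstar := by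
    rw [Matrix.mulVec_mulVec, Matrix.nonsing_inv_mul _ hdet, Matrix.one_mulVec]
  have hdiff : vstar - M⁻¹.mulVec (Nm.mulVec vstar)
      = M⁻¹.mulVec ((M - Nm).mulVec vstar) := by
    rw [Matrix.sub_mulVec, Matrix.mulVec_sub, hvstar_eq]
  have hMN : M - Nm = (B * Xᵀ * X) * (B - Bstar)ᵀ := by
    rw [hM, hNm, Matrix.transpose_sub, Matrix.mul_sub]
  have hCbound : enorm2 ((B - Bstar)ᵀ.mulVec vstar) ≤ ε * enorm2 vstar :=
    (enorm2_transpose_mulVec_le _ _).trans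
      (mul_le_mul_of_nonneg_right hε (enorm2_nonneg _))
  -- first term
  have key1 : enorm2 ((Bstarᵀ - Bᵀ).mulVec vstar) ≤ ε * enorm2 vstar := by
    have h1 : Bstarᵀ - Bᵀ = (-(B - Bstar))ᵀ := by rw [neg_sub, Matrix.transpose_sub]
    rw [h1, Matrix.transpose_neg, Matrix.neg_mulVec, enorm2_neg]
    exact hCbound
  -- second term
  have key2 : enorm2 (Bᵀ.mulVec (vstar - M⁻¹.mulVec (Nm.mulVec vstar)))
      ≤ specNorm X ^ 2 * (ε * enorm2 vstar) / sm ^ 2 := by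
    rw [enorm2_orth hB, hdiff, hMN]
    set w : Fin k → ℝ := ((B * Xᵀ * X) * (B - Bstar)ᵀ).mulVec vstar with hw
    have hw' : w = B.mulVec (Xᵀ.mulVec (X.mulVec ((B - Bstar)ᵀ.mulVec vstar))) := by
      simp [hw, Matrix.mulVec_mulVec, Matrix.mul_assoc]
    have hXn : 0 ≤ specNorm X := specNorm_nonneg X
    have h2 : enorm2 w ≤ specNorm X ^ 2 * (ε * enorm2 vstar) := by
      calc enorm2 w ≤ enorm2 (Xᵀ.mulVec (X.mulVec ((B - Bstar)ᵀ.mulVec vstar))) := by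
            rw [hw']; exact enorm2_contract hB _
        _ ≤ specNorm X * enorm2 (X.mulVec ((B - Bstar)ᵀ.mulVec vstar)) :=
            enorm2_transpose_mulVec_le _ _
        _ ≤ specNorm X * (specNorm X * enorm2 ((B - Bstar)ᵀ.mulVec vstar)) :=
            mul_le_mul_of_nonneg_left (enorm2_mulVec_le _ _) hXn
        _ ≤ specNorm X * (specNorm X * (ε * enorm2 vstar)) := by
            have := mul_le_mul_of_nonneg_left hCbound hXn
            exact mul_le_mul_of_nonneg_left this hXn
        _ = specNorm X ^ 2 * (ε * enorm2 vstar) := by ring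
    calc enorm2 (M⁻¹.mulVec w) ≤ enorm2 w / sm ^ 2 := hinvb w
      _ ≤ specNorm X ^ 2 * (ε * enorm2 vstar) / sm ^ 2 := by gcongr
  -- combine
  have hdecomp : Bstarᵀ.mulVec vstar - Bᵀ.mulVec (M⁻¹.mulVec (Nm.mulVec vstar))
      = (Bstarᵀ - Bᵀ).mulVec vstar + Bᵀ.mulVec (vstar - M⁻¹.mulVec (Nm.mulVec vstar)) := by
    rw [Matrix.sub_mulVec, Matrix.mulVec_sub]
    abel
  calc enorm2 (Bstarᵀ.mulVec vstar - Bᵀ.mulVec (M⁻¹.mulVec (Nm.mulVec vstar)))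
      = enorm2 ((Bstarᵀ - Bᵀ).mulVec vstar
          + Bᵀ.mulVec (vstar - M⁻¹.mulVec (Nm.mulVec vstar))) := by rw [hdecomp]
    _ ≤ enorm2 ((Bstarᵀ - Bᵀ).mulVec vstar)
          + enorm2 (Bᵀ.mulVec (vstar - M⁻¹.mulVec (Nm.mulVec vstar))) := enorm2_add_le _ _
    _ ≤ ε * enorm2 vstar + specNorm X ^ 2 * (ε * enorm2 vstar) / sm ^ 2 :=
          add_le_add key1 key2
    _ = ε * enorm2 vstar + specNorm X ^ 2 / sm ^ 2 * ε * enorm2 vstar := by ring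


end
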